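/- arXiv:2302.07991 — 2 statements merged into one kernel-verified Lean document; each statement's English description precedes it below -/
import Mathlib

section
/- Let (A, m) be a two-dimensional Gorenstein Noetherian local ring, I an m-primary ideal, and Q a parameter ideal with Q ⊆ I, I² = Q·I, and I = Q : I (i.e. I is a good ideal). Then ℓ_A(A/Q) = 2·ℓ_A(A/I); equivalently, the multiplicity satisfies e₀(I) = 2·ℓ_A(A/I). -/
open IsLocalRing

/-- The length of an `A`-module, as the Krull dimension of its lattice of submodules. -/
noncomputable def modLength (A M : Type*) [CommRing A] [AddCommGroup M] [Module A M] :
    WithBot ℕ∞ :=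
  Order.krullDim (Submodule A M)

/-- `Q` is a parameter ideal of the local ring `A` of dimension `d`: it is generated by a
system of `d` parameters, i.e. by `d` elements, with `A ⧸ Q` of finite length. -/
def IsParameterIdeal (A : Type*) [CommRing A] [IsLocalRing A] (d : ℕ) (Q : Ideal A) : Prop :=
  ∃ s : Finset A, s.card = d ∧ Ideal.span (s : Set A) = Q ∧ IsFiniteLength A (A ⧸ Q)

/-- A Noetherian local ring `A` of dimension `d` is Gorenstein iff the Artinian quotient
`A ⧸ Q` by any parameter ideal `Q` is self-injective (i.e. an Artinian Gorenstein ring). -/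
def IsGorensteinLocalRing (A : Type*) [CommRing A] [IsLocalRing A] (d : ℕ) : Prop :=
  IsNoetherianRing A ∧ ringKrullDim A = d ∧
    ∀ Q : Ideal A, IsParameterIdeal A d Q → Module.Injective (A ⧸ Q) (A ⧸ Q)


open Order

section OrderLemmas

variable {α β : Type*}

lemma myHeight_add_one_le [Preorder α] {a b : α} (h : a < b) :
    Order.height a + 1 ≤ Order.height b := by
  rw [Order.height_eq_iSup_lt_height b]
  exact le_iSup₂ (f := fun y (_ : y < b) => Order.height y + 1) a h

lemma len_le_height_prod [PartialOrder α] [PartialOrder β] (p : LTSeries (α × β)) :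
    (p.length : ℕ∞) ≤ Order.height (p.last).1 + Order.height (p.last).2 := by
  suffices H : ∀ i : Fin (p.length + 1),
      (i.1 : ℕ∞) ≤ Order.height (p i).1 + Order.height (p i).2 by
    simpa [RelSeries.last] using H (Fin.last p.length)
  intro i
  induction i using Fin.induction with
  | zero => simp
  | succ i ih =>
    have hlt : p i.castSucc < p i.succ := p.step i
    rw [Prod.lt_iff] at hlt
    have : (i.1 : ℕ∞) + 1 ≤ Order.height (p i.succ).1 + Order.height (p i.succ).2 := by
      rcases hlt with ⟨h1, h2⟩ | ⟨h1, h2⟩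
      · calc (i.1 : ℕ∞) + 1 ≤ (Order.height (p i.castSucc).1 + Order.height (p i.castSucc).2) + 1 :=
            add_le_add_left ih 1
        _ = (Order.height (p i.castSucc).1 + 1) + Order.height (p i.castSucc).2 := by ring
        _ ≤ Order.height (p i.succ).1 + Order.height (p i.succ).2 :=
            add_le_add (myHeight_add_one_le h1) (Order.height_mono h2)
      · calc (i.1 : ℕ∞) + 1 ≤ (Order.height (p i.castSucc).1 + Order.height (p i.castSucc).2) + 1 :=
            add_le_add_left ih 1
        _ = Order.height (p i.castSucc).1 + (Order.height (p i.castSucc).2 + 1) := by ring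
        _ ≤ Order.height (p i.succ).1 + Order.height (p i.succ).2 :=
            add_le_add (Order.height_mono h1) (myHeight_add_one_le h2)
    simpa using this

lemma myKrullDim_prod_le [PartialOrder α] [PartialOrder β] [Nonempty α] [Nonempty β] :
    krullDim (α × β) ≤ krullDim α + krullDim β := by
  show (⨆ (p : LTSeries (α × β)), (p.length : WithBot ℕ∞)) ≤ _
  apply iSup_le
  intro p
  calc (p.length : WithBot ℕ∞)
      ≤ ((Order.height (p.last).1 + Order.height (p.last).2 : ℕ∞) : WithBot ℕ∞) := by
        exact_mod_cast len_le_height_prod p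
    _ = ((Order.height (p.last).1 : ℕ∞) : WithBot ℕ∞) + ((Order.height (p.last).2 : ℕ∞)) := by
        push_cast; rfl
    _ ≤ krullDim α + krullDim β :=
        add_le_add (Order.height_le_krullDim _) (Order.height_le_krullDim _)

end OrderLemmas

section Trunc

variable {α : Type*} [Preorder α]

/-- truncation -/
lemma exists_ltSeries_of_le_krullDim [Nonempty α] {n : ℕ}
    (h : (n : WithBot ℕ∞) ≤ krullDim α) : ∃ p : LTSeries α, p.length = n := by
  by_contra hcon
  push_neg at hcon
  have hlt : ∀ p : LTSeries α, p.length < n := by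
    intro p
    rcases lt_or_ge p.length n with h' | h'
    · exact h'
    · refine absurd rfl (hcon ⟨n, fun i => p ⟨i.1, by omega⟩, fun i => p.strictMono ?_⟩)
      simp [Fin.lt_def]
  have : krullDim α < (n : WithBot ℕ∞) := by
    rcases n with - | m
    · exact absurd (hlt (RelSeries.singleton _ (Classical.arbitrary α))) (by simp)
    · have : krullDim α ≤ (m : WithBot ℕ∞) := by
        show (⨆ (p : LTSeries α), (p.length : WithBot ℕ∞)) ≤ _
        apply iSup_le
        intro p
        have := hlt p
        exact_mod_cast Nat.lt_succ_iff.mp this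
      refine lt_of_le_of_lt this ?_
      exact_mod_cast Nat.lt_succ_self m
  exact absurd h (not_le.mpr this)

end Trunc

section Glue

variable {α : Type*} [Lattice α]

lemma add_le_krullDim_of_intervals (a : α) {m n : ℕ}
    (hm : krullDim {x : α // x ≤ a} = (m : WithBot ℕ∞))
    (hn : krullDim {x : α // a ≤ x} = (n : WithBot ℕ∞)) :
    ((m + n : ℕ) : WithBot ℕ∞) ≤ krullDim α := by
  have : Nonempty {x : α // x ≤ a} := ⟨⟨a, le_rfl⟩⟩
  have : Nonempty {x : α // a ≤ x} := ⟨⟨a, le_rfl⟩⟩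
  obtain ⟨p, hp⟩ := exists_ltSeries_of_le_krullDim (α := {x : α // x ≤ a}) (n := m) hm.ge
  obtain ⟨q, hq⟩ := exists_ltSeries_of_le_krullDim (α := {x : α // a ≤ x}) (n := n) hn.ge
  let p₁ : LTSeries α := p.map Subtype.val fun _ _ h => h
  let q₁ : LTSeries α := q.map Subtype.val fun _ _ h => h
  have hp₁ : p₁.last ≤ a := (p.last).2
  have hq₁ : a ≤ q₁.head := (q.head).2
  have hlen : ∀ r : LTSeries α, m + n ≤ r.length → ((m + n : ℕ) : WithBot ℕ∞) ≤ krullDim α := by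
    intro r hr
    refine le_trans ?_ (LTSeries.length_le_krullDim r)
    exact_mod_cast hr
  have hp₁len : p₁.length = m := hp
  have hq₁len : q₁.length = n := hq
  by_cases hpa : p₁.last = a
  · by_cases hqa : q₁.head = a
    · exact hlen (RelSeries.smash p₁ q₁ (hpa.trans hqa.symm)) (by simp only [RelSeries.smash_length, RelSeries.snoc_length, RelSeries.cons_length, hp₁len, hq₁len]; omega)
    · exact hlen (RelSeries.smash p₁ (q₁.cons a (lt_of_le_of_ne hq₁ (Ne.symm hqa)))
        (by simpa using hpa)) (by simp only [RelSeries.smash_length, RelSeries.snoc_length, RelSeries.cons_length, hp₁len, hq₁len]; omega)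
  · have hlt : p₁.last < a := lt_of_le_of_ne hp₁ hpa
    by_cases hqa : q₁.head = a
    · exact hlen (RelSeries.smash (p₁.snoc a hlt) q₁ (by simpa using hqa.symm))
        (by simp only [RelSeries.smash_length, RelSeries.snoc_length, RelSeries.cons_length, hp₁len, hq₁len]; omega)
    · exact hlen (RelSeries.smash (p₁.snoc a hlt)
        (q₁.cons a (lt_of_le_of_ne hq₁ (Ne.symm hqa)))
          ((RelSeries.last_snoc _ _ _).trans (RelSeries.head_cons _ _ _).symm))
        (by simp only [RelSeries.smash_length, RelSeries.snoc_length, RelSeries.cons_length, hp₁len, hq₁len]; omega)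

end Glue

section Modular

variable {α : Type*} [Lattice α] [IsModularLattice α]

lemma krullDim_le_add_of_intervals (a : α) :
    krullDim α ≤ krullDim {x : α // x ≤ a} + krullDim {x : α // a ≤ x} := by
  have : Nonempty {x : α // x ≤ a} := ⟨⟨a, le_rfl⟩⟩
  have : Nonempty {x : α // a ≤ x} := ⟨⟨a, le_rfl⟩⟩
  have hmono : StrictMono (fun x : α =>
      ((⟨x ⊓ a, inf_le_right⟩ : {x : α // x ≤ a}), (⟨x ⊔ a, le_sup_right⟩ : {x : α // a ≤ x}))) := by
    intro x y hxy
    have := strictMono_inf_prod_sup (z := a) hxy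
    rw [Prod.lt_iff] at this ⊢
    rcases this with ⟨h1, h2⟩ | ⟨h1, h2⟩
    · exact Or.inl ⟨h1, h2⟩
    · exact Or.inr ⟨h1, h2⟩
  exact le_trans (krullDim_le_of_strictMono _ hmono) myKrullDim_prod_le

lemma krullDim_eq_add_of_intervals (a : α) {m n : ℕ}
    (hm : krullDim {x : α // x ≤ a} = (m : WithBot ℕ∞))
    (hn : krullDim {x : α // a ≤ x} = (n : WithBot ℕ∞)) :
    krullDim α = ((m + n : ℕ) : WithBot ℕ∞) := by
  refine le_antisymm ?_ (add_le_krullDim_of_intervals a hm hn)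
  refine le_trans (krullDim_le_add_of_intervals a) ?_
  rw [hm, hn]
  exact_mod_cast le_rfl

end Modular

section ModuleLength

variable {R : Type*} [CommRing R] {M N : Type*} [AddCommGroup M] [Module R M]
  [AddCommGroup N] [Module R N]

lemma modLength_congr (e : M ≃ₗ[R] N) : modLength R M = modLength R N :=
  Order.krullDim_eq_of_orderIso (Submodule.orderIsoMapComap e)

lemma modLength_subsingleton [Subsingleton M] : modLength R M = 0 := by
  have h1 : Subsingleton (Submodule R M) := by
    constructor
    intro p q
    ext x
    have : x = 0 := Subsingleton.elim x 0
    simp [this]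
  refine le_antisymm (Order.krullDim_nonpos_of_subsingleton) (Order.krullDim_nonneg)

lemma modLength_simple (h : IsSimpleModule R M) : modLength R M = 1 := by
  refine le_antisymm ?_ ?_
  · show (⨆ (p : LTSeries (Submodule R M)), (p.length : WithBot ℕ∞)) ≤ _
    apply iSup_le
    intro p
    have : p.length ≤ 1 := by
      by_contra hcon
      push_neg at hcon
      have h0 : p ⟨0, by omega⟩ < p ⟨1, by omega⟩ := p.strictMono (by simp [Fin.lt_def])
      have h1 : p ⟨1, by omega⟩ < p ⟨2, by omega⟩ := p.strictMono (by simp [Fin.lt_def])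
      rcases h.1.2 (p ⟨1, by omega⟩) with h' | h'
      · exact absurd (h' ▸ h0) (by simp)
      · exact absurd (h' ▸ h1) (by simp)
    exact_mod_cast this
  · have := LTSeries.length_le_krullDim
      ((RelSeries.singleton {(a, b) : Submodule R M × Submodule R M | a < b} ⊥).snoc ⊤
        (by simpa [RelSeries.last_singleton] using (haveI := h.1; (bot_lt_top : (⊥ : Submodule R M) < ⊤))))
    simpa [modLength] using this

lemma modLength_add (P : Submodule R M) {m n : ℕ}
    (hm : modLength R P = (m : WithBot ℕ∞)) (hn : modLength R (M ⧸ P) = (n : WithBot ℕ∞)) :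
    modLength R M = ((m + n : ℕ) : WithBot ℕ∞) := by
  have hm' : Order.krullDim {p : Submodule R M // p ≤ P} = (m : WithBot ℕ∞) := by
    rw [← Order.krullDim_eq_of_orderIso (Submodule.MapSubtype.orderIso P)]
    exact hm
  have hn' : Order.krullDim {p : Submodule R M // P ≤ p} = (n : WithBot ℕ∞) := by
    change Order.krullDim (Set.Ici P) = _
    rw [← Order.krullDim_eq_of_orderIso (Submodule.comapMkQRelIso P)]
    exact hn
  exact krullDim_eq_add_of_intervals P hm' hn'

lemma modLength_finite (h : IsFiniteLength R M) : ∃ n : ℕ, modLength R M = (n : WithBot ℕ∞) := by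
  induction h with
  | of_subsingleton => exact ⟨0, modLength_subsingleton⟩
  | @of_simple_quotient M _ _ P _ _ ih =>
    obtain ⟨m, hm⟩ := ih
    exact ⟨m + 1, modLength_add P hm (modLength_simple ‹_›)⟩

end ModuleLength

section Hom

universe u v

variable {R : Type u} [CommRing R] {M : Type v} [AddCommGroup M] [Module R M]
  {E : Type v} [AddCommGroup E] [Module R E]

lemma modLength_hom_add [Module.Injective R E] (P : Submodule R M) {a b : ℕ}
    (ha : modLength R ((M ⧸ P) →ₗ[R] E) = (a : WithBot ℕ∞))
    (hb : modLength R (P →ₗ[R] E) = (b : WithBot ℕ∞)) :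
    modLength R (M →ₗ[R] E) = ((a + b : ℕ) : WithBot ℕ∞) := by
  let ρ : (M →ₗ[R] E) →ₗ[R] (P →ₗ[R] E) := LinearMap.lcomp R E P.subtype
  have hsurj : Function.Surjective ρ := by
    intro g
    obtain ⟨h, hh⟩ := Module.Injective.out P.subtype P.injective_subtype g
    exact ⟨h, by ext x; exact hh x⟩
  let φ : ((M ⧸ P) →ₗ[R] E) →ₗ[R] (M →ₗ[R] E) := LinearMap.lcomp R E P.mkQ
  have hφinj : Function.Injective φ := by
    intro f g hfg
    ext x
    exact LinearMap.congr_fun hfg x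
  have hrange : LinearMap.range φ = LinearMap.ker ρ := by
    ext f
    simp only [LinearMap.mem_range, LinearMap.mem_ker]
    constructor
    · rintro ⟨g, rfl⟩
      ext x
      have hx : P.mkQ (x : M) = 0 := by
        simpa [Submodule.Quotient.mk_eq_zero] using x.2
      simp [ρ, φ, hx]
    · intro hf
      refine ⟨P.liftQ f fun x hx => ?_, ?_⟩
      · have : ρ f ⟨x, hx⟩ = 0 := by rw [hf]; rfl
        simpa [ρ] using this
      · ext x
        simp [φ]
  have e1 : ((M ⧸ P) →ₗ[R] E) ≃ₗ[R] LinearMap.ker ρ :=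
    (LinearEquiv.ofInjective φ hφinj).trans (LinearEquiv.ofEq _ _ hrange)
  have e2 : ((M →ₗ[R] E) ⧸ LinearMap.ker ρ) ≃ₗ[R] (P →ₗ[R] E) :=
    ρ.quotKerEquivOfSurjective hsurj
  exact modLength_add (LinearMap.ker ρ)
    (by rw [← modLength_congr e1]; exact ha)
    (by rw [modLength_congr e2]; exact hb)

lemma modLength_hom_quot (J : Ideal R) :
    modLength R ((R ⧸ J) →ₗ[R] R) = modLength R ↥((⊥ : Ideal R).colon J) := by
  let φ : ((R ⧸ J) →ₗ[R] R) →ₗ[R] R :=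
    { toFun := fun f => f (Submodule.Quotient.mk 1)
      map_add' := by intros; simp
      map_smul' := by intros; simp }
  have key : ∀ (f : (R ⧸ J) →ₗ[R] R) (r : R), f (Submodule.Quotient.mk r) = r * f (Submodule.Quotient.mk 1) := by
    intro f r
    have : (Submodule.Quotient.mk r : R ⧸ J) = r • (Submodule.Quotient.mk 1 : R ⧸ J) := by
      rw [← Submodule.Quotient.mk_smul]; simp
    rw [this, map_smul, smul_eq_mul]
  have hφinj : Function.Injective φ := by
    intro f g hfg
    apply LinearMap.ext
    intro x
    obtain ⟨y, rfl⟩ := Submodule.Quotient.mk_surjective J x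
    rw [key f, key g]
    simp only [φ, LinearMap.coe_mk, AddHom.coe_mk] at hfg
    rw [hfg]
  have hrange : LinearMap.range φ = (⊥ : Ideal R).colon J := by
    ext x
    simp only [LinearMap.mem_range, Submodule.mem_colon]
    constructor
    · rintro ⟨f, rfl⟩ p hp
      have hp0 : (Submodule.Quotient.mk p : R ⧸ J) = 0 :=
        (Submodule.Quotient.mk_eq_zero _).mpr hp
      have : f (Submodule.Quotient.mk p) = 0 := by rw [hp0, map_zero]
      rw [key f p] at this
      simp only [Submodule.mem_bot, φ, LinearMap.coe_mk, AddHom.coe_mk]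
      rw [smul_eq_mul, mul_comm]
      exact this
    · intro hx
      refine ⟨J.liftQ (LinearMap.toSpanSingleton R R x) fun j hj => ?_, ?_⟩
      · have := hx j hj
        simp only [Submodule.mem_bot, smul_eq_mul] at this
        simp only [LinearMap.mem_ker, LinearMap.toSpanSingleton_apply, smul_eq_mul]
        rw [mul_comm]; exact this
      · simp only [φ, LinearMap.coe_mk, AddHom.coe_mk]
        rw [Submodule.liftQ_apply]
        simp
  rw [modLength_congr (LinearEquiv.ofInjective φ hφinj), hrange]

end Hom

section Main

universe u

variable (R : Type u) [CommRing R] [IsLocalRing R] [Module.Injective R R]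

lemma main_dual {s : ℕ}
    (hs : modLength R ((R ⧸ IsLocalRing.maximalIdeal R) →ₗ[R] R) = (s : WithBot ℕ∞)) :
    ∀ (M : Type u) [AddCommGroup M] [Module R M], IsFiniteLength R M → ∀ n : ℕ,
      modLength R M = (n : WithBot ℕ∞) → modLength R (M →ₗ[R] R) = ((s * n : ℕ) : WithBot ℕ∞) := by
  intro M _ _ h
  induction h with
  | @of_subsingleton M _ _ _ =>
    intro n hn
    have h0 : modLength R M = ((0 : ℕ) : WithBot ℕ∞) := by
      simpa using modLength_subsingleton (R := R) (M := M)
    have : (n : WithBot ℕ∞) = ((0:ℕ) : WithBot ℕ∞) := by rw [← hn, h0]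
    have hn0 : n = 0 := by exact_mod_cast this
    subst hn0
    have : Subsingleton (M →ₗ[R] R) := by
      constructor
      intro f g
      ext x
      rw [Subsingleton.elim x 0, map_zero, map_zero]
    simpa using modLength_subsingleton (R := R) (M := (M →ₗ[R] R))
  | @of_simple_quotient M _ _ P hsimple hfin ih =>
    intro n hn
    obtain ⟨m, hm⟩ := modLength_finite hfin
    have hq : modLength R (M ⧸ P) = ((1:ℕ) : WithBot ℕ∞) := by
      simpa using modLength_simple hsimple
    have hM : modLength R M = ((m + 1 : ℕ) : WithBot ℕ∞) := modLength_add P hm hq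
    have hn' : n = m + 1 := by
      have : (n : WithBot ℕ∞) = ((m+1:ℕ) : WithBot ℕ∞) := by rw [← hn, hM]
      exact_mod_cast this
    obtain ⟨Imax, hImax, ⟨e⟩⟩ := isSimpleModule_iff_quot_maximal.mp hsimple
    have hIm : Imax = IsLocalRing.maximalIdeal R := IsLocalRing.eq_maximalIdeal hImax
    subst hIm
    have ha : modLength R ((M ⧸ P) →ₗ[R] R) = (s : WithBot ℕ∞) := by
      rw [modLength_congr (e.arrowCongr (LinearEquiv.refl R R))]
      exact hs
    have hb := ih m hm
    have := modLength_hom_add P ha hb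
    rw [this, hn']
    norm_cast
    ring

lemma dual_colon (hR : IsFiniteLength R R) (J : Ideal R) {n : ℕ}
    (hn : modLength R (R ⧸ J) = (n : WithBot ℕ∞)) :
    modLength R ↥((⊥ : Ideal R).colon J) = (n : WithBot ℕ∞) := by
  have hNA := isFiniteLength_iff_isNoetherian_isArtinian.mp hR
  have : IsNoetherian R R := hNA.1
  have : IsArtinian R R := hNA.2
  -- s exists
  have hfinColon : ∀ (K : Ideal R), IsFiniteLength R ↥K := fun K =>
    isFiniteLength_iff_isNoetherian_isArtinian.mpr ⟨inferInstance, inferInstance⟩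
  have hfinQuot : ∀ (K : Ideal R), IsFiniteLength R (R ⧸ K) := fun K =>
    isFiniteLength_iff_isNoetherian_isArtinian.mpr ⟨inferInstance, inferInstance⟩
  obtain ⟨s, hs'⟩ := modLength_finite (hfinColon ((⊥ : Ideal R).colon (IsLocalRing.maximalIdeal R)))
  have hs : modLength R ((R ⧸ IsLocalRing.maximalIdeal R) →ₗ[R] R) = (s : WithBot ℕ∞) := by
    rw [modLength_hom_quot]; exact hs'
  -- s = 1
  obtain ⟨l, hl⟩ := modLength_finite hR
  have hRR : modLength R ((R →ₗ[R] R)) = ((s * l : ℕ) : WithBot ℕ∞) :=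
    main_dual R hs R hR l hl
  have hRR' : modLength R ((R →ₗ[R] R)) = (l : WithBot ℕ∞) := by
    rw [modLength_congr (LinearMap.ringLmapEquivSelf R R R)]
    exact hl
  have hsl : s * l = l := by
    have : ((s * l : ℕ) : WithBot ℕ∞) = (l : WithBot ℕ∞) := by rw [← hRR, hRR']
    exact_mod_cast this
  have hl1 : 1 ≤ l := by
    by_contra hcon
    push_neg at hcon
    interval_cases l
    -- modLength R R = 0 but ⊥ < ⊤
    have hbt : (⊥ : Submodule R R) < ⊤ := by
      refine lt_of_le_of_ne bot_le ?_
      intro hbt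
      have : (1 : R) ∈ (⊥ : Submodule R R) := hbt ▸ Submodule.mem_top
      simp only [Submodule.mem_bot] at this
      exact one_ne_zero this
    have := LTSeries.length_le_krullDim
      ((RelSeries.singleton {(a, b) : Submodule R R × Submodule R R | a < b} ⊥).snoc ⊤
        (by simpa [RelSeries.last_singleton] using hbt))
    rw [show Order.krullDim (Submodule R R) = modLength R R from rfl, hl] at this
    norm_num at this
  have hs1 : s = 1 := by
    rcases Nat.lt_or_ge s 1 with h | h
    · interval_cases s <;> omega
    · nlinarith [hsl, hl1, Nat.one_le_iff_ne_zero.mp hl1]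
  subst hs1
  have := main_dual R hs (R ⧸ J) (hfinQuot J) n hn
  rw [modLength_hom_quot] at this
  rw [this]
  congr 1
  omega

end Main

section Transfer

variable {A B : Type*} [CommRing A] [CommRing B]

/-- Transfer the submodule lattice along a surjective ring hom with compatible actions. -/
def submoduleOrderIso (f : A →+* B) (hf : Function.Surjective f)
    (M : Type*) [AddCommGroup M] [Module A M] [Module B M]
    (hsmul : ∀ (a : A) (x : M), a • x = f a • x) :
    Submodule A M ≃o Submodule B M where
  toFun p :=
    { carrier := p
      add_mem' := fun h1 h2 => p.add_mem h1 h2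
      zero_mem' := p.zero_mem
      smul_mem' := by
        intro b x hx
        obtain ⟨a, rfl⟩ := hf b
        rw [← hsmul]
        exact p.smul_mem a hx }
  invFun q :=
    { carrier := q
      add_mem' := fun h1 h2 => q.add_mem h1 h2
      zero_mem' := q.zero_mem
      smul_mem' := by
        intro a x hx
        rw [hsmul]
        exact q.smul_mem (f a) hx }
  left_inv p := by ext x; rfl
  right_inv q := by ext x; rfl
  map_rel_iff' := Iff.rfl

/-- Restrict an order iso to lower intervals. -/
def orderIsoIic {α β : Type*} [Preorder α] [Preorder β] (e : α ≃o β) (a : α) :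
    {x : α // x ≤ a} ≃o {y : β // y ≤ e a} where
  toFun x := ⟨e x.1, e.le_iff_le.mpr x.2⟩
  invFun y := ⟨e.symm y.1, by simpa using e.symm.le_iff_le.mpr y.2⟩
  left_inv x := by ext; simp
  right_inv y := by ext; simp
  map_rel_iff' := e.le_iff_le

def orderIsoIci {α β : Type*} [Preorder α] [Preorder β] (e : α ≃o β) (a : α) :
    {x : α // a ≤ x} ≃o {y : β // e a ≤ y} where
  toFun x := ⟨e x.1, e.le_iff_le.mpr x.2⟩
  invFun y := ⟨e.symm y.1, by simpa using e.symm.le_iff_le.mpr y.2⟩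
  left_inv x := by ext; simp
  right_inv y := by ext; simp
  map_rel_iff' := e.le_iff_le

end Transfer

/-- For a good ideal `I` (i.e. `I² = QI` and `I = Q : I` for a parameter ideal `Q ⊆ I`) in a
two-dimensional Gorenstein Noetherian local ring, `ℓ_A(A/Q) = 2·ℓ_A(A/I)`; equivalently the
multiplicity satisfies `e₀(I) = 2·ℓ_A(A/I)`. -/
theorem stmt_12 (A : Type*) [CommRing A] [IsLocalRing A]
    (hA : IsGorensteinLocalRing A 2)
    (I : Ideal A) (hI : I.radical = maximalIdeal A)
    (Q : Ideal A) (hQ : IsParameterIdeal A 2 Q) (hQI : Q ≤ I)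
    (hsq : I ^ 2 = Q * I) (hgood : I = Q.colon I) :
    modLength A (A ⧸ Q) = 2 * modLength A (A ⧸ I) := by
  classical
  obtain ⟨hNoeth, hdim, hGor⟩ := hA
  obtain ⟨sQ, hsQcard, hsQspan, hfinAQ⟩ := hQ
  -- Q is proper
  have hQtop : Q ≠ ⊤ := by
    intro h
    have hItop : I = ⊤ := top_le_iff.mp (h ▸ hQI)
    have : I.radical = ⊤ := top_le_iff.mp (hItop ▸ Ideal.le_radical)
    rw [hI] at this
    exact (IsLocalRing.maximalIdeal.isMaximal A).ne_top this
  have : Nontrivial (A ⧸ Q) := Ideal.Quotient.nontrivial_iff.mpr hQtop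
  have : IsLocalRing (A ⧸ Q) :=
    IsLocalRing.of_surjective' (Ideal.Quotient.mk Q) Ideal.Quotient.mk_surjective
  have hInj : Module.Injective (A ⧸ Q) (A ⧸ Q) := hGor Q ⟨sQ, hsQcard, hsQspan, hfinAQ⟩
  -- compatible scalar actions
  have hsmul : ∀ (a : A) (x : A ⧸ Q), a • x = (Ideal.Quotient.mk Q a) • x := by
    intro a x
    obtain ⟨b, rfl⟩ := Submodule.Quotient.mk_surjective Q x
    rw [← Submodule.Quotient.mk_smul]
    rfl
  let L := submoduleOrderIso (Ideal.Quotient.mk Q) Ideal.Quotient.mk_surjective (A ⧸ Q) hsmul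
  let Ibar : Submodule A (A ⧸ Q) := Submodule.map Q.mkQ (I : Submodule A A)
  let J : Ideal (A ⧸ Q) := L Ibar
  have hmemJ : ∀ x, x ∈ J ↔ x ∈ Ibar := fun x => Iff.rfl
  -- finiteness on the A-side
  have hNA := isFiniteLength_iff_isNoetherian_isArtinian.mp hfinAQ
  have : IsNoetherian A (A ⧸ Q) := hNA.1
  have : IsArtinian A (A ⧸ Q) := hNA.2
  obtain ⟨m, hm⟩ := modLength_finite
    (show IsFiniteLength A ↥Ibar from
      isFiniteLength_iff_isNoetherian_isArtinian.mpr ⟨inferInstance, inferInstance⟩)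
  obtain ⟨n, hn⟩ := modLength_finite
    (show IsFiniteLength A ((A ⧸ Q) ⧸ Ibar) from
      isFiniteLength_iff_isNoetherian_isArtinian.mpr ⟨inferInstance, inferInstance⟩)
  have hAI : modLength A (A ⧸ I) = (n : WithBot ℕ∞) := by
    rw [← modLength_congr (Submodule.quotientQuotientEquivQuotient Q I hQI)]
    exact hn
  have hAQ : modLength A (A ⧸ Q) = ((m + n : ℕ) : WithBot ℕ∞) := modLength_add Ibar hm hn
  -- transfer lengths to the quotient ring
  have hmR : modLength (A ⧸ Q) ↥J = (m : WithBot ℕ∞) := by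
    rw [show modLength (A ⧸ Q) ↥J = Order.krullDim (Submodule (A ⧸ Q) ↥J) from rfl,
      Order.krullDim_eq_of_orderIso (Submodule.MapSubtype.orderIso J),
      ← Order.krullDim_eq_of_orderIso (orderIsoIic L Ibar),
      ← Order.krullDim_eq_of_orderIso (Submodule.MapSubtype.orderIso Ibar)]
    exact hm
  have hnR : modLength (A ⧸ Q) ((A ⧸ Q) ⧸ J) = (n : WithBot ℕ∞) := by
    rw [show modLength (A ⧸ Q) ((A ⧸ Q) ⧸ J) = Order.krullDim (Submodule (A ⧸ Q) ((A ⧸ Q) ⧸ J)) from rfl,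
      Order.krullDim_eq_of_orderIso (Submodule.comapMkQRelIso J)]
    change Order.krullDim {y // L Ibar ≤ y} = _
    rw [← Order.krullDim_eq_of_orderIso (orderIsoIci L Ibar)]
    change Order.krullDim (Set.Ici Ibar) = _
    rw [← Order.krullDim_eq_of_orderIso (Submodule.comapMkQRelIso Ibar)]
    exact hn
  -- finiteness on the R-side
  have finR : IsFiniteLength (A ⧸ Q) (A ⧸ Q) := by
    rw [isFiniteLength_iff_isNoetherian_isArtinian]
    constructor
    · rw [isNoetherian_iff']
      have : WellFoundedGT (Submodule A (A ⧸ Q)) := isNoetherian_iff'.mp inferInstance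
      exact (L.symm.toOrderEmbedding).wellFoundedGT
    · have : WellFoundedLT (Submodule A (A ⧸ Q)) := inferInstance
      exact (L.symm.toOrderEmbedding).wellFoundedLT
  -- the colon condition transfers
  have hJJ : (⊥ : Ideal (A ⧸ Q)).colon J = J := by
    ext x
    obtain ⟨a, rfl⟩ := Ideal.Quotient.mk_surjective x
    rw [Submodule.mem_colon]
    constructor
    · intro h
      have haI : a ∈ Q.colon I := by
        rw [Submodule.mem_colon]
        intro p hp
        have hmem : (Ideal.Quotient.mk Q p) ∈ J :=
          (hmemJ _).mpr ⟨p, hp, rfl⟩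
        have := h (Ideal.Quotient.mk Q p) hmem
        rw [smul_eq_mul, ← map_mul, Submodule.mem_bot, Ideal.Quotient.eq_zero_iff_mem] at this
        simpa [smul_eq_mul] using this
      rw [← hgood] at haI
      exact (hmemJ _).mpr ⟨a, haI, rfl⟩
    · intro h p hp
      obtain ⟨c, hc, rfl⟩ := Submodule.mem_map.mp ((hmemJ _).mp hp)
      obtain ⟨b, hb, hba⟩ := Submodule.mem_map.mp ((hmemJ _).mp h)
      have hbI : b ∈ Q.colon I := hgood ▸ hb
      have hbc : b * c ∈ Q := by
        have := Submodule.mem_colon.mp hbI c hc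
        simpa [smul_eq_mul] using this
      have hba' : Ideal.Quotient.mk Q b = Ideal.Quotient.mk Q a := hba
      rw [smul_eq_mul, Submodule.mem_bot]
      show Ideal.Quotient.mk Q a * Q.mkQ c = 0
      rw [show (Q.mkQ c : A ⧸ Q) = Ideal.Quotient.mk Q c from rfl, ← hba', ← map_mul,
        Ideal.Quotient.eq_zero_iff_mem]
      exact hbc
  -- Matlis duality over the Artinian Gorenstein quotient
  have hdual := dual_colon (A ⧸ Q) finR J hnR
  rw [hJJ] at hdual
  have hmn : m = n := by
    have : (m : WithBot ℕ∞) = (n : WithBot ℕ∞) := by rw [← hmR, hdual]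
    exact_mod_cast this
  subst hmn
  rw [hAQ, hAI]
  rw [show ((2 : WithBot ℕ∞)) = ((2 : ℕ) : WithBot ℕ∞) from rfl]
  norm_cast
  omega
end

section
/- Let (A, m) be a Noetherian local ring, I an m-primary ideal, Q ⊆ I an ideal, and suppose the filtration F_n = \overline{Iⁿ} (a multiplicative filtration with F_0 = A, F_1 = I, F_m·F_n ⊆ F_{m+n}) satisfies: for all n ≥ r, Q ∩ F_{n+1} = Q·F_n. If F_{r+1} = Q·F_r, then F_{n+1} = Q·F_n for all n ≥ r. -/
/-- If the multiplicative decreasing filtration `F` (with `F 0 = A`, `F 1 = I`)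
satisfies the Valabrega–Valla type condition `Q ⊓ F (n+1) = Q * F n` for all `n ≥ r`,
then `F (r+1) = Q * F r` propagates: `F (n+1) = Q * F n` for all `n ≥ r`. -/
theorem stmt_14 {A : Type*} [CommRing A] [IsLocalRing A] [IsNoetherianRing A]
    (I Q : Ideal A) (hQI : Q ≤ I)
    (hI : I.radical = IsLocalRing.maximalIdeal A)
    (F : ℕ → Ideal A) (hF0 : F 0 = ⊤) (hF1 : F 1 = I)
    (hmul : ∀ m n, F m * F n ≤ F (m + n)) (hanti : Antitone F)
    (r : ℕ) (hVV : ∀ n, r ≤ n → Q ⊓ F (n + 1) = Q * F n)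
    (hr : F (r + 1) = Q * F r) :
    ∀ n, r ≤ n → F (n + 1) = Q * F n := by
  intro n hn
  have hle : F (n + 1) ≤ Q := by
    calc F (n + 1) ≤ F (r + 1) := hanti (by omega)
    _ = Q * F r := hr
    _ ≤ Q := Ideal.mul_le_left
  have := hVV n hn
  rwa [inf_eq_right.mpr hle] at this
end
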